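/- Let σ ∈ (0,1), let y ≥ 2 be a real number, and let M be a finite set of positive integers such that every prime factor of every element of M is at most y. Then Σ_{m,n ∈ M} (gcd(m,n)/lcm(m,n))^σ ≤ |M| · Π_{p ≤ y, p prime} (1 + 2/(p^σ − 1)). -/

import Mathlib

open Finset

lemma aux_geom (r : ℝ) (h0 : 0 ≤ r) (h1 : r < 1) (n : ℕ) :
    ∑ i ∈ Finset.range n, r ^ i ≤ (1 - r)⁻¹ := by
  have h : (0:ℝ) < 1 - r := by linarith
  have heq : ∑ i ∈ Finset.range n, r ^ i = (1 - r ^ n) / (1 - r) := by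
    rw [geom_sum_eq (by linarith)]
    rw [div_eq_div_iff (by linarith) (by linarith)]
    ring
  rw [heq, ← one_div]
  apply div_le_div₀ (by norm_num) (by nlinarith [pow_nonneg h0 n]) h le_rfl

lemma aux_dist (r : ℝ) (h0 : 0 ≤ r) (h1 : r < 1) (a B : ℕ) (hab : a < B) :
    ∑ b ∈ Finset.range B, r ^ (max a b - min a b) ≤ 1 + 2 * (r * (1 - r)⁻¹) := by
  have hsplit : Finset.range B = Finset.Ico 0 a ∪ Finset.Ico a B := by
    rw [Finset.range_eq_Ico, Finset.Ico_union_Ico_eq_Ico (Nat.zero_le a) hab.le]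
  rw [hsplit, Finset.sum_union (by
    simp [Finset.disjoint_left]; intro x hx; omega)]
  have e1 : ∑ b ∈ Finset.Ico 0 a, r ^ (max a b - min a b)
      = ∑ b ∈ Finset.range a, r ^ (a - b) := by
    rw [← Finset.range_eq_Ico]
    refine Finset.sum_congr rfl fun b hb => ?_
    rw [Finset.mem_range] at hb
    congr 1; omega
  have e2 : ∑ b ∈ Finset.Ico a B, r ^ (max a b - min a b)
      = ∑ b ∈ Finset.range (B - a), r ^ b := by
    rw [Finset.sum_Ico_eq_sum_range]
    refine Finset.sum_congr rfl fun b hb => ?_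
    congr 1; omega
  have e3 : ∑ b ∈ Finset.range a, r ^ (a - b) = r * ∑ b ∈ Finset.range a, r ^ b := by
    rw [← Finset.sum_range_reflect (fun b => r ^ (a - b)) a, Finset.mul_sum]
    refine Finset.sum_congr rfl fun b hb => ?_
    rw [Finset.mem_range] at hb
    rw [← pow_succ']
    congr 1; omega
  rw [e1, e2, e3]
  have g1 := aux_geom r h0 h1 a
  have g2 := aux_geom r h0 h1 (B - a)
  have h : (0:ℝ) < 1 - r := by linarith
  have hi : (1-r)⁻¹ = 1 + r * (1-r)⁻¹ := by field_simp; ring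
  have : r * ∑ b ∈ Finset.range a, r ^ b ≤ r * (1-r)⁻¹ :=
    mul_le_mul_of_nonneg_left g1 h0
  linarith

lemma aux_term (σ : ℝ) (P : Finset ℕ) (hP : ∀ p ∈ P, p.Prime)
    (m n : ℕ) (hm : m ≠ 0) (hn : n ≠ 0)
    (hsm : m.factorization.support ⊆ P) (hsn : n.factorization.support ⊆ P) :
    ((Nat.gcd m n : ℝ) / (Nat.lcm m n : ℝ)) ^ σ
      = ∏ p ∈ P, (((p : ℝ) ^ σ)⁻¹) ^
          (max (m.factorization p) (n.factorization p)
            - min (m.factorization p) (n.factorization p)) := by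
  have hgne : Nat.gcd m n ≠ 0 := Nat.gcd_ne_zero_left hm
  have hlne : Nat.lcm m n ≠ 0 := Nat.lcm_ne_zero hm hn
  have hgf := Nat.factorization_gcd hm hn
  have hlf := Nat.factorization_lcm hm hn
  have hgs : (Nat.gcd m n).factorization.support ⊆ P := by
    intro p hp
    rw [Finsupp.mem_support_iff, hgf, Finsupp.inf_apply] at hp
    apply hsm
    rw [Finsupp.mem_support_iff]
    omega
  have hls : (Nat.lcm m n).factorization.support ⊆ P := by
    intro p hp
    rw [Finsupp.mem_support_iff, hlf, Finsupp.sup_apply] at hp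
    rcases Nat.eq_zero_or_pos (m.factorization p) with h | h
    · apply hsn; rw [Finsupp.mem_support_iff]; omega
    · apply hsm; rw [Finsupp.mem_support_iff]; omega
  have hg : (Nat.gcd m n : ℕ)
      = ∏ p ∈ P, p ^ min (m.factorization p) (n.factorization p) := by
    conv_lhs => rw [← Nat.factorization_prod_pow_eq_self hgne]
    rw [Finsupp.prod, Finset.prod_subset hgs (fun p _ hns => by
      rw [Finsupp.notMem_support_iff] at hns
      rw [hns, pow_zero])]
    exact Finset.prod_congr rfl fun p _ => by rw [hgf, Finsupp.inf_apply]
  have hl : (Nat.lcm m n : ℕ)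
      = ∏ p ∈ P, p ^ max (m.factorization p) (n.factorization p) := by
    conv_lhs => rw [← Nat.factorization_prod_pow_eq_self hlne]
    rw [Finsupp.prod, Finset.prod_subset hls (fun p _ hns => by
      rw [Finsupp.notMem_support_iff] at hns
      rw [hns, pow_zero])]
    exact Finset.prod_congr rfl fun p _ => by rw [hlf, Finsupp.sup_apply]
  have hratio : (Nat.gcd m n : ℝ) / (Nat.lcm m n : ℝ)
      = ∏ p ∈ P, (((p : ℝ) ^ (max (m.factorization p) (n.factorization p)
          - min (m.factorization p) (n.factorization p)))⁻¹) := by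
    rw [hg, hl]
    push_cast
    rw [← Finset.prod_div_distrib]
    refine Finset.prod_congr rfl fun p hp => ?_
    have hp0 : (0:ℝ) < (p:ℝ) := by exact_mod_cast (hP p hp).pos
    have key : (p:ℝ) ^ (min (m.factorization p) (n.factorization p))
        * (p:ℝ) ^ (max (m.factorization p) (n.factorization p)
            - min (m.factorization p) (n.factorization p))
        = (p:ℝ) ^ (max (m.factorization p) (n.factorization p)) := by
      rw [← pow_add]; congr 1; omega
    field_simp
    linear_combination key
  rw [hratio, ← Real.finset_prod_rpow P _
    (fun p _ => inv_nonneg.mpr (pow_nonneg (Nat.cast_nonneg p) _)) σ]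
  refine Finset.prod_congr rfl fun p hp => ?_
  have hp0 : (0:ℝ) ≤ (p:ℝ) := Nat.cast_nonneg p
  set D := max (m.factorization p) (n.factorization p)
      - min (m.factorization p) (n.factorization p)
  have hDs : ((p:ℝ) ^ (D:ℝ)) ^ σ = ((p:ℝ) ^ σ) ^ (D:ℝ) := by
    rw [← Real.rpow_mul hp0, ← Real.rpow_mul hp0, mul_comm]
  rw [← Real.rpow_natCast (p:ℝ) D, Real.inv_rpow (Real.rpow_nonneg hp0 _), hDs,
    Real.rpow_natCast, inv_pow]

/-- Let `σ ∈ (0,1)`, let `y ≥ 2` be a real number, and let `M` be a finite set of positive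
integers such that every prime factor of every element of `M` is at most `y`. Then
`Σ_{m,n ∈ M} (gcd(m,n)/lcm(m,n))^σ ≤ |M| · Π_{p ≤ y prime} (1 + 2/(p^σ − 1))`. -/
theorem stmt_9 (σ : ℝ) (hσ : σ ∈ Set.Ioo (0 : ℝ) 1) (y : ℝ) (hy : 2 ≤ y)
    (M : Finset ℕ) (hpos : ∀ m ∈ M, 0 < m)
    (hsmooth : ∀ m ∈ M, ∀ p : ℕ, p.Prime → p ∣ m → (p : ℝ) ≤ y) :
    ∑ m ∈ M, ∑ n ∈ M, ((Nat.gcd m n : ℝ) / (Nat.lcm m n : ℝ)) ^ σ ≤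
      (M.card : ℝ) *
        ∏ p ∈ (Finset.Icc 1 ⌊y⌋₊).filter Nat.Prime, (1 + 2 / ((p : ℝ) ^ σ - 1)) := by
  classical
  obtain ⟨hσ0, hσ1⟩ := hσ
  set P := (Finset.Icc 1 ⌊y⌋₊).filter Nat.Prime with hPdef
  have hP : ∀ p ∈ P, p.Prime := fun p hp => (Finset.mem_filter.mp hp).2
  have hsupp : ∀ n ∈ M, n.factorization.support ⊆ P := by
    intro n hn p hp
    rw [Nat.support_factorization, Nat.mem_primeFactors] at hp
    obtain ⟨hpp, hpd, _⟩ := hp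
    rw [hPdef, Finset.mem_filter, Finset.mem_Icc]
    refine ⟨⟨hpp.one_lt.le, ?_⟩, hpp⟩
    exact Nat.le_floor (hsmooth n hn p hpp hpd)
  -- key per-prime facts
  have hp1 : ∀ p ∈ P, 1 < ((p:ℝ) ^ σ) := by
    intro p hp
    have h2 : (1:ℝ) < (p:ℝ) := by exact_mod_cast (hP p hp).one_lt
    exact Real.one_lt_rpow_iff_of_pos (by linarith) |>.mpr (Or.inl ⟨h2, hσ0⟩)
  set r : ℕ → ℝ := fun p => ((p:ℝ) ^ σ)⁻¹ with hrdef
  have hr0 : ∀ p ∈ P, 0 ≤ r p := fun p hp =>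
    inv_nonneg.mpr (by linarith [hp1 p hp])
  have hr1 : ∀ p ∈ P, r p < 1 := fun p hp =>
    inv_lt_one_of_one_lt₀ (hp1 p hp)
  set B := M.sup id + 1 with hBdef
  have hexp : ∀ n ∈ M, ∀ p, n.factorization p < B := by
    intro n hn p
    have h1 : n.factorization p < n := Nat.factorization_lt p (hpos n hn).ne'
    have h2 : n ≤ M.sup id := Finset.le_sup (f := id) hn
    omega
  -- the inner bound
  have inner : ∀ m ∈ M, ∑ n ∈ M, ((Nat.gcd m n : ℝ) / (Nat.lcm m n : ℝ)) ^ σ ≤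
      ∏ p ∈ P, (1 + 2 / ((p : ℝ) ^ σ - 1)) := by
    intro m hm
    have hterm : ∀ n ∈ M, ((Nat.gcd m n : ℝ) / (Nat.lcm m n : ℝ)) ^ σ
        = ∏ p ∈ P, (r p) ^ (max (m.factorization p) (n.factorization p)
            - min (m.factorization p) (n.factorization p)) :=
      fun n hn => aux_term σ P hP m n (hpos m hm).ne' (hpos n hn).ne'
        (hsupp m hm) (hsupp n hn)
    rw [Finset.sum_congr rfl hterm]
    -- rewrite each product over attach
    have hattach : ∀ n : ℕ, ∏ p ∈ P, (r p) ^ (max (m.factorization p) (n.factorization p)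
            - min (m.factorization p) (n.factorization p))
        = ∏ x ∈ P.attach, (r x.1) ^ (max (m.factorization x.1) (n.factorization x.1)
            - min (m.factorization x.1) (n.factorization x.1)) := by
      intro n; exact (Finset.prod_attach P _).symm
    -- injection into pi
    have step2 : ∑ n ∈ M, ∏ p ∈ P, (r p) ^ (max (m.factorization p) (n.factorization p)
            - min (m.factorization p) (n.factorization p))
        ≤ ∑ f ∈ P.pi (fun _ => Finset.range B), ∏ x ∈ P.attach,
            (r x.1) ^ (max (m.factorization x.1) (f x.1 x.2)
              - min (m.factorization x.1) (f x.1 x.2)) := by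
      simp_rw [hattach]
      set e : ℕ → (∀ a, a ∈ P → ℕ) := fun n => fun p _ => n.factorization p with hedef
      have hinj : Set.InjOn e M := by
        intro n1 h1 n2 h2 he
        refine Nat.eq_of_factorization_eq (hpos n1 h1).ne' (hpos n2 h2).ne' fun p => ?_
        by_cases hpP : p ∈ P
        · exact congrFun (congrFun he p) hpP
        · have e1 : n1.factorization p = 0 := by
            by_contra hc
            exact hpP (hsupp n1 h1 (Finsupp.mem_support_iff.mpr hc))
          have e2 : n2.factorization p = 0 := by
            by_contra hc
            exact hpP (hsupp n2 h2 (Finsupp.mem_support_iff.mpr hc))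
          rw [e1, e2]
      set G : (∀ a, a ∈ P → ℕ) → ℝ := fun f => ∏ x ∈ P.attach,
          (r x.1) ^ (max (m.factorization x.1) (f x.1 x.2)
            - min (m.factorization x.1) (f x.1 x.2)) with hG
      have hGe : ∑ n ∈ M, (∏ x ∈ P.attach,
          (r x.1) ^ (max (m.factorization x.1) (n.factorization x.1)
            - min (m.factorization x.1) (n.factorization x.1))) = ∑ n ∈ M, G (e n) := rfl
      rw [hGe, ← Finset.sum_image (g := e) (f := G) (s := M) (fun n h1 n' h2 he => hinj h1 h2 he)]
      apply Finset.sum_le_sum_of_subset_of_nonneg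
      · intro f hf
        rw [Finset.mem_image] at hf
        obtain ⟨n, hn, rfl⟩ := hf
        rw [Finset.mem_pi]
        intro p hp
        rw [Finset.mem_range]
        exact hexp n hn p
      · intro f _ _
        exact Finset.prod_nonneg fun x _ => pow_nonneg (hr0 x.1 x.2) _
    have step3 : ∑ f ∈ P.pi (fun _ => Finset.range B), ∏ x ∈ P.attach,
            (r x.1) ^ (max (m.factorization x.1) (f x.1 x.2)
              - min (m.factorization x.1) (f x.1 x.2))
        = ∏ p ∈ P, ∑ b ∈ Finset.range B,
            (r p) ^ (max (m.factorization p) b - min (m.factorization p) b) :=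
      (Finset.prod_sum P (fun _ => Finset.range B)
        (fun p b => (r p) ^ (max (m.factorization p) b - min (m.factorization p) b))).symm
    refine step2.trans (step3.le.trans ?_)
    apply Finset.prod_le_prod
    · intro p hp
      exact Finset.sum_nonneg fun b _ => pow_nonneg (hr0 p hp) _
    · intro p hp
      have hb := aux_dist (r p) (hr0 p hp) (hr1 p hp) (m.factorization p) B
        (hexp m hm p)
      refine hb.trans (le_of_eq ?_)
      have h1 : (1:ℝ) < (p:ℝ)^σ := hp1 p hp
      rw [hrdef]
      field_simp
  calc ∑ m ∈ M, ∑ n ∈ M, ((Nat.gcd m n : ℝ) / (Nat.lcm m n : ℝ)) ^ σ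
      ≤ ∑ _m ∈ M, ∏ p ∈ P, (1 + 2 / ((p : ℝ) ^ σ - 1)) :=
        Finset.sum_le_sum inner
    _ = (M.card : ℝ) * ∏ p ∈ P, (1 + 2 / ((p : ℝ) ^ σ - 1)) := by
        rw [Finset.sum_const, nsmul_eq_mul]
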